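/- Let β > 0, κ > 0, α > 0, c = 36α²/(169β), and u(x,t) = (105α²/(169κβ))·csch⁴(½√(α/(13β))·(x−ct)). Then u satisfies the Kawahara equation u_t + κ u u_x + α u_xxx − β u_xxxxx = 0 for all (x,t) with x ≠ ct. -/

import Mathlib

noncomputable def kawF0 (y : ℝ) : ℝ := (1 / Real.sinh y)^4
noncomputable def kawF1 (y : ℝ) : ℝ := -4 * Real.cosh y / Real.sinh y ^ 5
noncomputable def kawF2 (y : ℝ) : ℝ :=
  -4 / Real.sinh y ^ 4 + 20 * Real.cosh y ^ 2 / Real.sinh y ^ 6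
noncomputable def kawF3 (y : ℝ) : ℝ :=
  56 * Real.cosh y / Real.sinh y ^ 5 - 120 * Real.cosh y ^ 3 / Real.sinh y ^ 7
noncomputable def kawF4 (y : ℝ) : ℝ :=
  56 / Real.sinh y ^ 4 - 640 * Real.cosh y ^ 2 / Real.sinh y ^ 6
    + 840 * Real.cosh y ^ 4 / Real.sinh y ^ 8
noncomputable def kawF5 (y : ℝ) : ℝ :=
  -1504 * Real.cosh y / Real.sinh y ^ 5 + 7200 * Real.cosh y ^ 3 / Real.sinh y ^ 7
    - 6720 * Real.cosh y ^ 5 / Real.sinh y ^ 9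

lemma kawD0 (y : ℝ) (hy : Real.sinh y ≠ 0) : HasDerivAt kawF0 (kawF1 y) y := by
  have h := ((hasDerivAt_const y (1:ℝ)).div (Real.hasDerivAt_sinh y) hy).pow 4
  refine h.congr_deriv ?_
  unfold kawF1
  simp only [Pi.pow_apply, Pi.div_apply]
  field_simp
  ring_nf; rw [← mul_pow, mul_inv_cancel₀ hy]; ring

lemma kawD1 (y : ℝ) (hy : Real.sinh y ≠ 0) : HasDerivAt kawF1 (kawF2 y) y := by
  have h := ((Real.hasDerivAt_cosh y).const_mul (-4 : ℝ)).div
    ((Real.hasDerivAt_sinh y).pow 5) (pow_ne_zero 5 hy)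
  refine h.congr_deriv ?_
  unfold kawF2
  simp only [Pi.pow_apply, Pi.div_apply]
  field_simp
  ring

lemma kawD2 (y : ℝ) (hy : Real.sinh y ≠ 0) : HasDerivAt kawF2 (kawF3 y) y := by
  have h1 := (hasDerivAt_const y (-4:ℝ)).div ((Real.hasDerivAt_sinh y).pow 4) (pow_ne_zero 4 hy)
  have h2 := (((Real.hasDerivAt_cosh y).pow 2).const_mul (20:ℝ)).div
    ((Real.hasDerivAt_sinh y).pow 6) (pow_ne_zero 6 hy)
  have h := h1.add h2
  refine h.congr_deriv ?_
  unfold kawF3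
  simp only [Pi.pow_apply, Pi.div_apply]
  field_simp
  ring

lemma kawD3 (y : ℝ) (hy : Real.sinh y ≠ 0) : HasDerivAt kawF3 (kawF4 y) y := by
  have h1 := ((Real.hasDerivAt_cosh y).const_mul (56:ℝ)).div
    ((Real.hasDerivAt_sinh y).pow 5) (pow_ne_zero 5 hy)
  have h2 := (((Real.hasDerivAt_cosh y).pow 3).const_mul (120:ℝ)).div
    ((Real.hasDerivAt_sinh y).pow 7) (pow_ne_zero 7 hy)
  have h := h1.sub h2
  refine h.congr_deriv ?_
  unfold kawF4
  simp only [Pi.pow_apply, Pi.div_apply]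
  field_simp
  ring

lemma kawD4 (y : ℝ) (hy : Real.sinh y ≠ 0) : HasDerivAt kawF4 (kawF5 y) y := by
  have h1 := (hasDerivAt_const y (56:ℝ)).div ((Real.hasDerivAt_sinh y).pow 4) (pow_ne_zero 4 hy)
  have h2 := (((Real.hasDerivAt_cosh y).pow 2).const_mul (640:ℝ)).div
    ((Real.hasDerivAt_sinh y).pow 6) (pow_ne_zero 6 hy)
  have h3 := (((Real.hasDerivAt_cosh y).pow 4).const_mul (840:ℝ)).div
    ((Real.hasDerivAt_sinh y).pow 8) (pow_ne_zero 8 hy)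
  have h := (h1.sub h2).add h3
  refine h.congr_deriv ?_
  unfold kawF5
  simp only [Pi.pow_apply, Pi.div_apply]
  field_simp
  ring

lemma kawChain (B K M : ℝ) {f f' : ℝ → ℝ}
    (hf : ∀ y, Real.sinh y ≠ 0 → HasDerivAt f (f' y) y) {x : ℝ}
    (hx : Real.sinh (K * x + M) ≠ 0) :
    HasDerivAt (fun z => B * f (K * z + M)) (B * K * f' (K * x + M)) x := by
  have h1 : HasDerivAt (fun z : ℝ => K * z + M) K x := by
    simpa using ((hasDerivAt_id x).const_mul K).add_const M
  have h := ((hf _ hx).comp x h1).const_mul B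
  refine h.congr_deriv ?_
  ring

lemma kawStep {F G G' : ℝ → ℝ} {S : Set ℝ} (hS : IsOpen S)
    (hFG : Set.EqOn F G S) (hG : ∀ x ∈ S, HasDerivAt G (G' x) x) :
    Set.EqOn (deriv F) G' S := by
  intro x hx
  have h1 : deriv F x = deriv G x :=
    Filter.EventuallyEq.deriv_eq (Filter.eventuallyEq_of_mem (hS.mem_nhds hx) hFG)
  rw [h1, (hG x hx).deriv]

lemma kawKey (α β κ s ch k A c : ℝ) (hβ : 0 < β) (hκ : 0 < κ) (hα : 0 < α)
    (hs : s ≠ 0) (hch : ch ^ 2 = 1 + s ^ 2) (hk : k ^ 2 = α / (52 * β))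
    (hA : A = 105 * α ^ 2 / (169 * κ * β)) (hc : c = 36 * α ^ 2 / (169 * β)) :
    A * -(k * c) * (-4 * ch / s ^ 5)
      + κ * (A * (1 / s) ^ 4) * (A * k * (-4 * ch / s ^ 5))
      + α * (A * k ^ 3 * (56 * ch / s ^ 5 - 120 * ch ^ 3 / s ^ 7))
      - β * (A * k ^ 5 * (-1504 * ch / s ^ 5 + 7200 * ch ^ 3 / s ^ 7 - 6720 * ch ^ 5 / s ^ 9))
      = 0 := by
  have e3 : k ^ 3 = k * (α / (52 * β)) := by rw [← hk]; ring
  have e5 : k ^ 5 = k * (α / (52 * β)) ^ 2 := by rw [← hk]; ring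
  have c3 : ch ^ 3 = ch * (1 + s ^ 2) := by rw [← hch]; ring
  have c5 : ch ^ 5 = ch * (1 + s ^ 2) ^ 2 := by rw [← hch]; ring
  rw [e3, e5, c3, c5, hA, hc]
  have hb := hβ.ne'
  have hk' := hκ.ne'
  field_simp
  ring

/-- the csch⁴ solution of the Kawahara equation (α > 0). -/
theorem stmt_15 (α β κ c : ℝ) (hβ : 0 < β) (hκ : 0 < κ) (hα : 0 < α)
    (hc : c = 36 * α^2 / (169 * β))
    (u : ℝ → ℝ → ℝ)
    (hu : ∀ x t : ℝ, u x t = (105 * α^2 / (169 * κ * β)) *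
      (1 / Real.sinh ((1/2) * Real.sqrt (α / (13 * β)) * (x - c * t)))^4) :
    ∀ x t : ℝ, x ≠ c * t →
      deriv (fun t' => u x t') t
        + κ * u x t * deriv (fun x' => u x' t) x
        + α * iteratedDeriv 3 (fun x' => u x' t) x
        - β * iteratedDeriv 5 (fun x' => u x' t) x = 0 := by
  intro x t hx
  set k : ℝ := (1/2) * Real.sqrt (α / (13 * β)) with hkdef
  set A : ℝ := 105 * α^2 / (169 * κ * β) with hAdef
  have hkpos : 0 < k := by
    rw [hkdef]
    have : 0 < Real.sqrt (α / (13 * β)) := Real.sqrt_pos.mpr (by positivity)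
    linarith
  have hk2 : k ^ 2 = α / (52 * β) := by
    rw [hkdef, mul_pow, Real.sq_sqrt (by positivity : (0:ℝ) ≤ α / (13 * β)),
      show ((1:ℝ)/2)^2 = 1/4 by norm_num, div_mul_div_comm,
      div_eq_div_iff (by positivity) (by positivity)]
    ring
  set m : ℝ := -(k * c * t) with hmdef
  set S : Set ℝ := {x' : ℝ | x' ≠ c * t} with hSdef
  have hS : IsOpen S := isOpen_ne
  have hsS : ∀ x' ∈ S, Real.sinh (k * x' + m) ≠ 0 := by
    intro x' hx' h0
    have h1 : k * x' + m = 0 := Real.sinh_eq_zero.mp h0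
    have h2 : k * (x' - c * t) = 0 := by rw [hmdef] at h1; linarith [h1]
    rcases mul_eq_zero.mp h2 with h | h
    · exact absurd h hkpos.ne'
    · exact hx' (sub_eq_zero.mp h)
  -- the functions
  have hU : (fun x' => u x' t) = fun x' => A * kawF0 (k * x' + m) := by
    funext x'
    rw [hu x' t, kawF0]
    congr 2
    rw [hmdef, hkdef]; ring
  have hG1 : ∀ x' ∈ S, HasDerivAt (fun z => A * kawF0 (k * z + m))
      ((fun z => A * k ^ 1 * kawF1 (k * z + m)) x') x' := by
    intro x' hx'
    have h := kawChain A k m kawD0 (hsS x' hx')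
    convert h using 1; ring
  have hG2 : ∀ x' ∈ S, HasDerivAt (fun z => A * k ^ 1 * kawF1 (k * z + m))
      ((fun z => A * k ^ 2 * kawF2 (k * z + m)) x') x' := by
    intro x' hx'
    have h := kawChain (A * k ^ 1) k m kawD1 (hsS x' hx')
    convert h using 1; ring
  have hG3 : ∀ x' ∈ S, HasDerivAt (fun z => A * k ^ 2 * kawF2 (k * z + m))
      ((fun z => A * k ^ 3 * kawF3 (k * z + m)) x') x' := by
    intro x' hx'
    have h := kawChain (A * k ^ 2) k m kawD2 (hsS x' hx')
    convert h using 1; ring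
  have hG4 : ∀ x' ∈ S, HasDerivAt (fun z => A * k ^ 3 * kawF3 (k * z + m))
      ((fun z => A * k ^ 4 * kawF4 (k * z + m)) x') x' := by
    intro x' hx'
    have h := kawChain (A * k ^ 3) k m kawD3 (hsS x' hx')
    convert h using 1; ring
  have hG5 : ∀ x' ∈ S, HasDerivAt (fun z => A * k ^ 4 * kawF4 (k * z + m))
      ((fun z => A * k ^ 5 * kawF5 (k * z + m)) x') x' := by
    intro x' hx'
    have h := kawChain (A * k ^ 4) k m kawD4 (hsS x' hx')
    convert h using 1; ring
  have E0 : Set.EqOn (iteratedDeriv 0 (fun x' => u x' t))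
      (fun z => A * kawF0 (k * z + m)) S := by
    intro x' _
    simp only [iteratedDeriv_zero]
    exact congrFun hU x'
  have E1 : Set.EqOn (iteratedDeriv 1 (fun x' => u x' t))
      (fun z => A * k ^ 1 * kawF1 (k * z + m)) S := by
    rw [iteratedDeriv_succ]; exact kawStep hS E0 hG1
  have E2 : Set.EqOn (iteratedDeriv 2 (fun x' => u x' t))
      (fun z => A * k ^ 2 * kawF2 (k * z + m)) S := by
    rw [iteratedDeriv_succ]; exact kawStep hS E1 hG2
  have E3 : Set.EqOn (iteratedDeriv 3 (fun x' => u x' t))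
      (fun z => A * k ^ 3 * kawF3 (k * z + m)) S := by
    rw [iteratedDeriv_succ]; exact kawStep hS E2 hG3
  have E4 : Set.EqOn (iteratedDeriv 4 (fun x' => u x' t))
      (fun z => A * k ^ 4 * kawF4 (k * z + m)) S := by
    rw [iteratedDeriv_succ]; exact kawStep hS E3 hG4
  have E5 : Set.EqOn (iteratedDeriv 5 (fun x' => u x' t))
      (fun z => A * k ^ 5 * kawF5 (k * z + m)) S := by
    rw [iteratedDeriv_succ]; exact kawStep hS E4 hG5
  have hxS : x ∈ S := hx
  -- time derivative
  have hUt : (fun t' => u x t') = fun t' => A * kawF0 (-(k * c) * t' + k * x) := by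
    funext t'
    rw [hu x t', kawF0]
    congr 2
    rw [hkdef]; ring
  have harg : -(k * c) * t + k * x = k * x + m := by rw [hmdef]; ring
  have hsinht : Real.sinh (-(k * c) * t + k * x) ≠ 0 := by
    rw [harg]; exact hsS x hxS
  have hdt : deriv (fun t' => u x t') t = A * -(k * c) * kawF1 (k * x + m) := by
    rw [hUt]
    have h := (kawChain A (-(k * c)) (k * x) kawD0 hsinht).deriv
    rw [h, harg]
  -- spatial first derivative
  have hdx : deriv (fun x' => u x' t) x = A * k ^ 1 * kawF1 (k * x + m) := by
    have := E1 hxS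
    rwa [iteratedDeriv_one] at this
  have hut : u x t = A * kawF0 (k * x + m) := by
    rw [hu x t, kawF0]; congr 2; rw [hmdef, hkdef]; ring
  rw [hdt, hdx, E3 hxS, E5 hxS, hut]
  have hs := hsS x hxS
  have hch : Real.cosh (k * x + m) ^ 2 = 1 + Real.sinh (k * x + m) ^ 2 :=
    Real.cosh_sq' (k * x + m)
  have key := kawKey α β κ (Real.sinh (k * x + m)) (Real.cosh (k * x + m)) k A c
    hβ hκ hα hs hch hk2 hAdef hc
  simp only [kawF0, kawF1, kawF3, kawF5]
  simpa [pow_one] using key
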